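/- Let X' = (t',x') ∈ Q, and let R > 0 and 0 < t̄ < t' be such that the closure of B_t̄(X',R) is contained in Q and u(t,x) = min over y ∈ Ω of [(t − t̄) L((x − y)/(t − t̄)) + u(t̄, y)] for each (t,x) ∈ B_t̄(X',R). Then ⟨p − q, x − y⟩ ≤ (Λ/(t' − t̄)) |x − y|² for every x, y ∈ B(x',R), p ∈ ∇⁺u(t',x) and q ∈ ∇⁺u(t',y), where Λ = max{⟨A⁻¹z, z⟩ : z ∈ ℝⁿ, |z| = 1}. -/

import Mathlib

open scoped RealInnerProductSpace
open Filter Topology Set Metric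

set_option maxHeartbeats 1000000

noncomputable section

/-- The Lagrangian `L(q) = ½ ⟨A⁻¹ q, q⟩`. -/
def Lag {n : ℕ} (A : Matrix (Fin n) (Fin n) ℝ) (q : EuclideanSpace ℝ (Fin n)) : ℝ :=
  (1 / 2) * ⟪Matrix.toEuclideanLin A⁻¹ q, q⟫

/-- The Hamiltonian `H(p) = ½ ⟨A p, p⟩`. -/
def Ham {n : ℕ} (A : Matrix (Fin n) (Fin n) ℝ) (p : EuclideanSpace ℝ (Fin n)) : ℝ :=
  (1 / 2) * ⟪Matrix.toEuclideanLin A p, p⟫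

/-- Euclidean norm on `ℝ × ℝⁿ`. -/
def pnorm {n : ℕ} (V : ℝ × EuclideanSpace ℝ (Fin n)) : ℝ :=
  Real.sqrt (V.1 ^ 2 + ‖V.2‖ ^ 2)

/-- Euclidean pairing on `ℝ × ℝⁿ`. -/
def pairR {n : ℕ} (P V : ℝ × EuclideanSpace ℝ (Fin n)) : ℝ :=
  P.1 * V.1 + ⟪P.2, V.2⟫

/-- Open Euclidean ball in `ℝ × ℝⁿ`. -/
def pball {n : ℕ} (X : ℝ × EuclideanSpace ℝ (Fin n)) (R : ℝ) :
    Set (ℝ × EuclideanSpace ℝ (Fin n)) :=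
  {Y | pnorm (Y - X) < R}

/-- `B_t̄(X,R) = ((t̄,∞) × ℝⁿ) ∩ B(X,R)`. -/
def tball {n : ℕ} (tbar : ℝ) (X : ℝ × EuclideanSpace ℝ (Fin n)) (R : ℝ) :
    Set (ℝ × EuclideanSpace ℝ (Fin n)) :=
  {Y | tbar < Y.1} ∩ pball X R

/-- Superdifferential of `w` at `X`:
`P ∈ D⁺w(X)` iff `limsup_{Y→X} (w(Y)−w(X)−⟨P,Y−X⟩)/|Y−X| ≤ 0`. -/
def superDiff {n : ℕ} (w : ℝ × EuclideanSpace ℝ (Fin n) → ℝ)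
    (X P : ℝ × EuclideanSpace ℝ (Fin n)) : Prop :=
  ∀ ε > 0, ∀ᶠ Y in 𝓝[≠] X, w Y - w X - pairR P (Y - X) ≤ ε * pnorm (Y - X)

/-- The spatial superdifferential `∇⁺w(x)` of a function `w : ℝⁿ → ℝ`. -/
def spaceSuperDiff {n : ℕ} (w : EuclideanSpace ℝ (Fin n) → ℝ)
    (x p : EuclideanSpace ℝ (Fin n)) : Prop :=
  ∀ ε > 0, ∀ᶠ y in 𝓝[≠] x, w y - w x - ⟪p, y - x⟫ ≤ ε * ‖y - x‖





/-- quadratic form -/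
def sqf {n : ℕ} (M : Matrix (Fin n) (Fin n) ℝ) (v : EuclideanSpace ℝ (Fin n)) : ℝ :=
  ⟪Matrix.toEuclideanLin M v, v⟫

lemma sqf_identity {n : ℕ} (M : Matrix (Fin n) (Fin n) ℝ) (x h : EuclideanSpace ℝ (Fin n)) (t : ℝ) :
    (1 - t) * sqf M x + t * sqf M (x + h) - sqf M (x + t • h) = t * (1 - t) * sqf M h := by
  simp only [sqf, map_add, map_smul, inner_add_left, inner_add_right, real_inner_smul_left,
    real_inner_smul_right]
  ring

lemma sqf_neg {n : ℕ} (M : Matrix (Fin n) (Fin n) ℝ) (v : EuclideanSpace ℝ (Fin n)) :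
    sqf M (-v) = sqf M v := by
  simp [sqf, inner_neg_neg]

lemma sqf_smul {n : ℕ} (M : Matrix (Fin n) (Fin n) ℝ) (c : ℝ) (v : EuclideanSpace ℝ (Fin n)) :
    sqf M (c • v) = c ^ 2 * sqf M v := by
  simp only [sqf, map_smul, real_inner_smul_left, real_inner_smul_right]
  ring

lemma st6_rayleigh {n : ℕ} {M : Matrix (Fin n) (Fin n) ℝ} {Λ : ℝ}
    (hΛ : ∀ r ∈ {r | ∃ z : EuclideanSpace ℝ (Fin n), ‖z‖ = 1 ∧
      r = ⟪Matrix.toEuclideanLin M z, z⟫}, r ≤ Λ)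
    {v : EuclideanSpace ℝ (Fin n)} (hv : v ≠ 0) :
    sqf M v ≤ Λ * ‖v‖ ^ 2 := by
  have hc : (0:ℝ) < ‖v‖ := norm_pos_iff.2 hv
  set z : EuclideanSpace ℝ (Fin n) := ‖v‖⁻¹ • v with hz
  have hz1 : ‖z‖ = 1 := by
    rw [hz, norm_smul, norm_inv, norm_norm, inv_mul_cancel₀ hc.ne']
  have h1 : sqf M z ≤ Λ := hΛ _ ⟨z, hz1, rfl⟩
  have h2 : sqf M z = ‖v‖⁻¹ ^ 2 * sqf M v := by rw [hz, sqf_smul]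
  rw [h2] at h1
  have := mul_le_mul_of_nonneg_left h1 (le_of_lt (by positivity : (0:ℝ) < ‖v‖ ^ 2))
  calc sqf M v = ‖v‖ ^ 2 * (‖v‖⁻¹ ^ 2 * sqf M v) := by field_simp
    _ ≤ ‖v‖ ^ 2 * Λ := this
    _ = Λ * ‖v‖ ^ 2 := by ring

/-- Key semiconcavity estimate. -/
lemma st6_key {n : ℕ} (M : Matrix (Fin n) (Fin n) ℝ) {s : ℝ} (hs : 0 < s)
    {v : EuclideanSpace ℝ (Fin n) → ℝ} {S : Set (EuclideanSpace ℝ (Fin n))} (hS : IsOpen S)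
    (hrep : ∀ m ∈ S, ∃ w c, v m = (2 * s)⁻¹ * sqf M (m - w) + c ∧
      ∀ b ∈ S, v b ≤ (2 * s)⁻¹ * sqf M (b - w) + c)
    {a b : EuclideanSpace ℝ (Fin n)} (ha : a ∈ S) (hb : b ∈ S) (hab : a ≠ b)
    {p : EuclideanSpace ℝ (Fin n)} (hp : spaceSuperDiff v a p) :
    v b - v a ≤ ⟪p, b - a⟫ + (2 * s)⁻¹ * sqf M (b - a) := by
  set h : EuclideanSpace ℝ (Fin n) := b - a with hhdef
  have hh : h ≠ 0 := sub_ne_zero.2 (Ne.symm hab)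
  have hnh : (0:ℝ) < ‖h‖ := norm_pos_iff.2 hh
  refine le_of_forall_pos_le_add ?_
  intro ε hε
  set C : ℝ := (2 * s)⁻¹ * sqf M h with hCdef
  -- the curve t ↦ a + t • h
  have hcont : Tendsto (fun t : ℝ => a + t • h) (𝓝 0) (𝓝 a) := by
    have : Continuous (fun t : ℝ => a + t • h) := by continuity
    have := this.tendsto 0
    simpa using this
  have htend : Tendsto (fun t : ℝ => a + t • h) (𝓝[>] (0:ℝ)) (𝓝[≠] a) := by
    rw [tendsto_nhdsWithin_iff]
    refine ⟨hcont.mono_left nhdsWithin_le_nhds, ?_⟩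
    filter_upwards [eventually_mem_nhdsWithin] with t ht
    simp only [mem_compl_iff, mem_singleton_iff]
    intro hcontra
    have : t • h = 0 := by
      have := congrArg (fun z => z - a) hcontra
      simpa using this
    rcases smul_eq_zero.1 this with h1 | h2
    · exact (mem_Ioi.1 ht).ne' h1
    · exact hh h2
  have E1 : ∀ᶠ t in 𝓝[>] (0:ℝ),
      v (a + t • h) - v a - ⟪p, (a + t • h) - a⟫ ≤ (ε / (2 * ‖h‖)) * ‖(a + t • h) - a‖ :=
    htend.eventually (hp _ (by positivity))
  have E2 : ∀ᶠ t in 𝓝[>] (0:ℝ), a + t • h ∈ S :=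
    (htend.mono_right nhdsWithin_le_nhds).eventually (hS.mem_nhds ha)
  have E3 : ∀ᶠ t in 𝓝[>] (0:ℝ), t * |C| < ε / 2 := by
    have hT : Tendsto (fun t : ℝ => t * |C|) (𝓝[>] (0:ℝ)) (𝓝 0) := by
      have hc : Continuous (fun t : ℝ => t * |C|) := by continuity
      simpa using (hc.tendsto 0).mono_left nhdsWithin_le_nhds
    filter_upwards [hT (Iio_mem_nhds (by positivity : (0:ℝ) < ε / 2))] with t ht
    exact ht
  have E4 : ∀ᶠ t in 𝓝[>] (0:ℝ), t < 1 := by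
    refine eventually_nhdsWithin_of_eventually_nhds ?_
    exact Filter.Tendsto.eventually_lt_const one_pos tendsto_id
  have E5 : ∀ᶠ t in 𝓝[>] (0:ℝ), 0 < t := eventually_mem_nhdsWithin
  obtain ⟨t, htu, htS, htC, ht1, ht0⟩ := (E1.and (E2.and (E3.and (E4.and E5)))).exists
  -- use the representation at the midpoint m = a + t • h
  obtain ⟨w, c, hmeq, hmle⟩ := hrep (a + t • h) htS
  have h1 : v a ≤ (2 * s)⁻¹ * sqf M (a - w) + c := hmle a ha
  have h2 : v b ≤ (2 * s)⁻¹ * sqf M (b - w) + c := hmle b hb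
  have hid : (1 - t) * sqf M (a - w) + t * sqf M (b - w)
      = sqf M ((a + t • h) - w) + t * (1 - t) * sqf M h := by
    have := sqf_identity M (a - w) h t
    have hbw : b - w = (a - w) + h := by rw [hhdef]; abel
    have hmw : (a + t • h) - w = (a - w) + t • h := by abel
    rw [hbw, hmw]; linarith [this]
  -- convexity combination
  have hcomb : (1 - t) * v a + t * v b ≤ v (a + t • h) + t * (1 - t) * C := by
    have k1 : (1 - t) * v a ≤ (1 - t) * ((2 * s)⁻¹ * sqf M (a - w) + c) :=
      mul_le_mul_of_nonneg_left h1 (by linarith)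
    have k2 : t * v b ≤ t * ((2 * s)⁻¹ * sqf M (b - w) + c) :=
      mul_le_mul_of_nonneg_left h2 (le_of_lt ht0)
    have hs2 : (0:ℝ) < (2 * s)⁻¹ := by positivity
    calc (1 - t) * v a + t * v b
        ≤ (1 - t) * ((2 * s)⁻¹ * sqf M (a - w) + c) + t * ((2 * s)⁻¹ * sqf M (b - w) + c) := by
          linarith
      _ = (2 * s)⁻¹ * ((1 - t) * sqf M (a - w) + t * sqf M (b - w)) + c := by ring
      _ = (2 * s)⁻¹ * (sqf M ((a + t • h) - w) + t * (1 - t) * sqf M h) + c := by rw [hid]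
      _ = ((2 * s)⁻¹ * sqf M ((a + t • h) - w) + c) + t * (1 - t) * C := by rw [hCdef]; ring
      _ = v (a + t • h) + t * (1 - t) * C := by rw [hmeq]
  -- superdifferential bound
  have hsup : v (a + t • h) - v a ≤ t * ⟪p, h⟫ + (ε / (2 * ‖h‖)) * (t * ‖h‖) := by
    have hsimp1 : (a + t • h) - a = t • h := by abel
    rw [hsimp1] at htu
    have : ⟪p, t • h⟫ = t * ⟪p, h⟫ := real_inner_smul_right p h t
    have hn : ‖t • h‖ = t * ‖h‖ := by
      rw [norm_smul, Real.norm_eq_abs, abs_of_pos ht0]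
    rw [this, hn] at htu
    linarith
  -- combine
  have hmain : t * (v b - v a) ≤ t * ⟪p, h⟫ + (ε / (2 * ‖h‖)) * (t * ‖h‖) + t * (1 - t) * C := by
    have : t * (v b - v a) = ((1 - t) * v a + t * v b) - v a := by ring
    rw [this]
    linarith
  have hdiv : v b - v a ≤ ⟪p, h⟫ + ε / 2 + (1 - t) * C := by
    have hε2 : (ε / (2 * ‖h‖)) * (t * ‖h‖) = t * (ε / 2) := by field_simp
    rw [hε2] at hmain
    have := (mul_le_mul_iff_right₀ ht0).1 (by linarith [hmain] :
      t * (v b - v a) ≤ t * (⟪p, h⟫ + ε / 2 + (1 - t) * C))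
    exact this
  have hlast : (1 - t) * C ≤ C + ε / 2 := by
    have : (1 - t) * C = C - t * C := by ring
    rw [this]
    have h5 : t * (-C) ≤ t * |C| := mul_le_mul_of_nonneg_left (neg_le_abs C) ht0.le
    linarith
  linarith



lemma st6_lag_eq {n : ℕ} (A : Matrix (Fin n) (Fin n) ℝ) {s : ℝ} (hs : s ≠ 0) (v : EuclideanSpace ℝ (Fin n)) :
    s * Lag A (s⁻¹ • v) = (2 * s)⁻¹ * sqf A⁻¹ v := by
  simp only [Lag, sqf, map_smul, real_inner_smul_left, real_inner_smul_right]
  field_simp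

lemma st6_mem_tball {n : ℕ} (t' : ℝ) (x' : EuclideanSpace ℝ (Fin n)) (tbar R : ℝ) (htbar : tbar < t')
    {z : EuclideanSpace ℝ (Fin n)} (hz : z ∈ Metric.ball x' R) :
    ((t', z) : ℝ × EuclideanSpace ℝ (Fin n)) ∈ tball tbar (t', x') R := by
  constructor
  · exact htbar
  · show pnorm ((t', z) - (t', x')) < R
    have : ((t', z) - (t', x') : ℝ × EuclideanSpace ℝ (Fin n)) = (0, z - x') := by
      simp [Prod.ext_iff]
    rw [this]
    unfold pnorm
    simp only
    rw [show (0:ℝ) ^ 2 + ‖z - x'‖ ^ 2 = ‖z - x'‖ ^ 2 by ring, Real.sqrt_sq (norm_nonneg _)]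
    rwa [mem_ball, dist_eq_norm] at hz


/-- spatial monotonicity estimate for the superdifferential:
`⟨p − q, x − y⟩ ≤ (Λ/(t'−t̄)) |x−y|²` for `p ∈ ∇⁺u(t',x)`, `q ∈ ∇⁺u(t',y)`,
`x, y ∈ B(x',R)`. -/
theorem statement6
    {n : ℕ} (hn : 1 ≤ n)
    (Ω : Set (EuclideanSpace ℝ (Fin n))) (hΩo : IsOpen Ω)
    (hΩb : Bornology.IsBounded Ω)
    (A : Matrix (Fin n) (Fin n) ℝ) (hA : A.PosDef)
    (Q : Set (ℝ × EuclideanSpace ℝ (Fin n))) (hQ : Q = Ioi (0 : ℝ) ×ˢ Ω)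
    (φ u : ℝ × EuclideanSpace ℝ (Fin n) → ℝ)
    (hφ : ∃ K, LipschitzOnWith K φ (frontier Q))
    (hcomp : ∀ t x s y, (t, x) ∈ frontier Q → (s, y) ∈ frontier Q → 0 ≤ s → s < t →
      φ (t, x) - φ (s, y) ≤ (t - s) * Lag A ((t - s)⁻¹ • (x - y)))
    (hu : ∀ X ∈ closure Q, IsLeast
      {v | ∃ s y, (s, y) ∈ frontier Q ∧ s < X.1 ∧
        v = (X.1 - s) * Lag A ((X.1 - s)⁻¹ • (X.2 - y)) + φ (s, y)} (u X))
    (t' : ℝ) (x' : EuclideanSpace ℝ (Fin n)) (hX' : (t', x') ∈ Q)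
    (R : ℝ) (hR : 0 < R) (tbar : ℝ) (htbar0 : 0 < tbar) (htbar : tbar < t')
    (hcl : closure (tball tbar (t', x') R) ⊆ Q)
    (hmin : ∀ X ∈ tball tbar (t', x') R,
      IsLeast {v | ∃ y ∈ Ω,
        v = (X.1 - tbar) * Lag A ((X.1 - tbar)⁻¹ • (X.2 - y)) + u (tbar, y)} (u X))
    (Λ : ℝ) (hΛ : IsGreatest {r | ∃ z : EuclideanSpace ℝ (Fin n), ‖z‖ = 1 ∧
      r = ⟪Matrix.toEuclideanLin A⁻¹ z, z⟫} Λ)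
    (x y : EuclideanSpace ℝ (Fin n))
    (hx : x ∈ Metric.ball x' R) (hy : y ∈ Metric.ball x' R)
    (p q : EuclideanSpace ℝ (Fin n))
    (hp : spaceSuperDiff (fun z => u (t', z)) x p)
    (hq : spaceSuperDiff (fun z => u (t', z)) y q) :
    ⟪p - q, x - y⟫ ≤ Λ / (t' - tbar) * ‖x - y‖ ^ 2 := by
  rcases eq_or_ne x y with rfl | hxy
  · simp
  set s : ℝ := t' - tbar with hsdef
  have hs : 0 < s := by simp [hsdef]; linarith
  -- the representation hypothesis for st6_key
  have hrep : ∀ m ∈ Metric.ball x' R, ∃ w c,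
      (fun z => u (t', z)) m = (2 * s)⁻¹ * sqf A⁻¹ (m - w) + c ∧
      ∀ b ∈ Metric.ball x' R, (fun z => u (t', z)) b ≤ (2 * s)⁻¹ * sqf A⁻¹ (b - w) + c := by
    intro m hm
    obtain ⟨⟨w, hw, heq⟩, hlb⟩ := hmin (t', m) (st6_mem_tball t' x' tbar R htbar hm)
    refine ⟨w, u (tbar, w), ?_, ?_⟩
    · calc u (t', m) = s * Lag A (s⁻¹ • (m - w)) + u (tbar, w) := heq
        _ = (2 * s)⁻¹ * sqf A⁻¹ (m - w) + u (tbar, w) := by rw [st6_lag_eq A hs.ne']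
    · intro b hb
      obtain ⟨_, hlb2⟩ := hmin (t', b) (st6_mem_tball t' x' tbar R htbar hb)
      have h2 : u (t', b) ≤ s * Lag A (s⁻¹ • (b - w)) + u (tbar, w) := hlb2 ⟨w, hw, rfl⟩
      calc u (t', b) ≤ s * Lag A (s⁻¹ • (b - w)) + u (tbar, w) := h2
        _ = (2 * s)⁻¹ * sqf A⁻¹ (b - w) + u (tbar, w) := by rw [st6_lag_eq A hs.ne']
  have h1 := st6_key A⁻¹ hs isOpen_ball hrep hx hy hxy hp
  have h2 := st6_key A⁻¹ hs isOpen_ball hrep hy hx hxy.symm hq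
  have hqf : sqf A⁻¹ (y - x) = sqf A⁻¹ (x - y) := by
    rw [show (y - x : EuclideanSpace ℝ (Fin n)) = -(x - y) from (neg_sub x y).symm, sqf_neg]
  have hray : sqf A⁻¹ (x - y) ≤ Λ * ‖x - y‖ ^ 2 := st6_rayleigh hΛ.2 (sub_ne_zero.2 hxy)
  have hip : ⟪p, y - x⟫ = -⟪p, x - y⟫ := by rw [← inner_neg_right, neg_sub]
  have hpq : ⟪p - q, x - y⟫ = ⟪p, x - y⟫ - ⟪q, x - y⟫ := inner_sub_left p q (x - y)
  have hsum : (2 * s)⁻¹ * sqf A⁻¹ (x - y) + (2 * s)⁻¹ * sqf A⁻¹ (x - y)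
      = s⁻¹ * sqf A⁻¹ (x - y) := by
    field_simp
    ring
  have hmono : s⁻¹ * sqf A⁻¹ (x - y) ≤ s⁻¹ * (Λ * ‖x - y‖ ^ 2) :=
    mul_le_mul_of_nonneg_left hray (inv_nonneg.2 hs.le)
  have hgoal : Λ / s * ‖x - y‖ ^ 2 = s⁻¹ * (Λ * ‖x - y‖ ^ 2) := by ring
  rw [hqf] at h1
  linarith
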